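/- arXiv:2001.04204 — 3 statements merged into one kernel-verified Lean document; each statement's English description precedes it below -/
import Mathlib

section
/- Let A and B be unital associative ℂ-algebras with B having countable dimension over ℂ. If W is a simple A-module and V is a simple B-module, then W ⊗_ℂ V is a simple A ⊗_ℂ B-module. -/
open scoped TensorProduct

/-- The `A ⊗[ℂ] B`-module structure on `W ⊗[ℂ] V`, with `(a ⊗ b) • (w ⊗ v) = (a•w) ⊗ (b•v)`. -/
noncomputable def tensorMod (A B W V : Type) [Ring A] [Algebra ℂ A] [Ring B] [Algebra ℂ B]
    [AddCommGroup W] [Module ℂ W] [Module A W] [IsScalarTower ℂ A W] [SMulCommClass ℂ A W]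
    [AddCommGroup V] [Module ℂ V] [Module B V] [IsScalarTower ℂ B V] [SMulCommClass ℂ B V] :
    Module (A ⊗[ℂ] B) (W ⊗[ℂ] V) :=
  Module.compHom _
    (((Module.endTensorEndAlgHom (R := ℂ) (S := ℂ) (A := ℂ) (M := W) (N := V)).comp
      (Algebra.TensorProduct.map (Algebra.lsmul ℂ ℂ W : A →ₐ[ℂ] Module.End ℂ W)
        (Algebra.lsmul ℂ ℂ V : B →ₐ[ℂ] Module.End ℂ V))).toRingHom)


open Polynomial in
lemma resolvent_rank {D : Type} [DivisionRing D] [Algebra ℂ D] {f : D}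
    (halg : ¬ IsAlgebraic ℂ f) : Cardinal.continuum ≤ Module.rank ℂ D := by
  classical
  set Z : Subring D := Subring.centralizer {f} with hZ
  set E : Subring D := Subring.centralizer (Z : Set D) with hE
  have hfZ : f ∈ Z := Subring.mem_centralizer_iff.mpr (by rintro g rfl; rfl)
  have hfE : f ∈ E := Subring.mem_centralizer_iff.mpr
    (fun g hg => (Subring.mem_centralizer_iff.mp hg f rfl).symm)
  have hEZ : ∀ e ∈ E, e ∈ Z := fun e he =>
    Subring.mem_centralizer_iff.mpr (fun g hg => by
      rw [Set.mem_singleton_iff] at hg; rw [hg]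
      exact Subring.mem_centralizer_iff.mp he f (SetLike.mem_coe.mpr hfZ))
  have hcomm : ∀ a b : E, a * b = b * a := by
    rintro ⟨a, ha⟩ ⟨b, hb⟩
    refine Subtype.ext ?_
    show a * b = b * a
    exact Subring.mem_centralizer_iff.mp hb a (SetLike.mem_coe.mpr (hEZ a ha))
  have hinv : ∀ a : E, (a : D)⁻¹ ∈ E := by
    rintro ⟨a, ha⟩
    refine Subring.mem_centralizer_iff.mpr (fun g hg => ?_)
    have hca : Commute g a := Subring.mem_centralizer_iff.mp ha g hg
    exact hca.inv_right₀
  have hfield : IsField E := by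
    refine ⟨⟨0, 1, fun h => ?_⟩, fun {a b} => hcomm a b, fun {a} ha => ?_⟩
    · exact zero_ne_one (congrArg (Subtype.val) h)
    · refine ⟨⟨(a : D)⁻¹, hinv a⟩, Subtype.ext ?_⟩
      have haD : (a : D) ≠ 0 := fun h => ha (Subtype.ext h)
      show (a : D) * (a : D)⁻¹ = 1
      exact mul_inv_cancel₀ haD
  letI : Field E := hfield.toField
  have hcen : ∀ c : ℂ, algebraMap ℂ D c ∈ E := fun c =>
    Subring.mem_centralizer_iff.mpr (fun g _ => (Algebra.commutes c g).symm)
  letI : Algebra ℂ E := RingHom.toAlgebra ((algebraMap ℂ D).codRestrict E hcen)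
  let φ : E →ₐ[ℂ] D := { toRingHom := E.subtype, commutes' := fun c => rfl }
  set x : E := ⟨f, hfE⟩ with hx
  have hxt : Transcendental ℂ x := by
    intro hax
    obtain ⟨p, hp0, hp⟩ := hax
    refine halg ⟨p, hp0, ?_⟩
    have h2 := Polynomial.aeval_algHom_apply φ x p
    rw [hp, map_zero] at h2
    have h3 : φ x = f := rfl
    rw [h3] at h2
    exact h2
  have li := hxt.linearIndependent_sub_inv
  have hker : LinearMap.ker φ.toLinearMap = ⊥ :=
    LinearMap.ker_eq_bot.mpr (fun a b hab => Subtype.ext hab)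
  have li2 := li.map' φ.toLinearMap hker
  have hcard := li2.cardinal_le_rank
  rwa [Cardinal.mk_complex] at hcard

open Polynomial in
lemma dixmier_aux {B V : Type} [Ring B] [Algebra ℂ B]
    [AddCommGroup V] [Module ℂ V] [Module B V] [IsScalarTower ℂ B V] [SMulCommClass ℂ B V]
    (hV : IsSimpleModule B V) (hrank : Module.rank ℂ V ≤ Cardinal.aleph0)
    (f : Module.End B V) : ∃ c : ℂ, f = algebraMap ℂ (Module.End B V) c := by
  classical
  haveI := hV
  haveI := IsSimpleModule.nontrivial B V
  letI : DivisionRing (Module.End B V) := Module.End.instDivisionRing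
  by_cases halg : IsAlgebraic ℂ f
  · have hint : IsIntegral ℂ f := halg.isIntegral
    have hpne : minpoly ℂ f ≠ 0 := minpoly.ne_zero hint
    have hdeg : 0 < (minpoly ℂ f).degree := minpoly.degree_pos hint
    obtain ⟨c, hc⟩ := Complex.exists_root hdeg
    obtain ⟨q, hq⟩ := Polynomial.dvd_iff_isRoot.mpr hc
    have hq0 : q ≠ 0 := by rintro rfl; simp at hq; exact hpne hq
    have hqdeg : q.degree < (minpoly ℂ f).degree := by
      rw [hq, Polynomial.degree_mul, Polynomial.degree_X_sub_C,
        Polynomial.degree_eq_natDegree hq0]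
      exact_mod_cast Nat.lt_one_add_iff.mpr le_rfl
    have haq : Polynomial.aeval f q ≠ 0 := fun h =>
      not_lt_of_ge (minpoly.degree_le_of_ne_zero ℂ f hq0 h) hqdeg
    have h0 : (f - algebraMap ℂ _ c) * Polynomial.aeval f q = 0 := by
      have h1 := minpoly.aeval ℂ f
      rw [hq, map_mul] at h1
      simpa [Polynomial.aeval_X, Polynomial.aeval_C, map_sub] using h1
    rcases mul_eq_zero.mp h0 with h | h
    · exact ⟨c, by rwa [sub_eq_zero] at h⟩
    · exact absurd h haq
  · exfalso
    have hDrank : Cardinal.continuum ≤ Module.rank ℂ (Module.End B V) :=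
      resolvent_rank halg
    obtain ⟨v₀, hv₀⟩ := exists_ne (0 : V)
    let eval : Module.End B V →ₗ[ℂ] V :=
      { toFun := fun g => g v₀
        map_add' := fun g h => rfl
        map_smul' := fun c g => rfl }
    have hinj : Function.Injective eval := by
      intro g h hgh
      by_contra hne
      have hgne : g - h ≠ 0 := sub_ne_zero.mpr hne
      have hbij := LinearMap.bijective_of_ne_zero hgne
      refine hv₀ (hbij.injective ?_)
      show (g - h) v₀ = (g - h) 0
      simp only [map_zero, LinearMap.sub_apply]
      exact sub_eq_zero.mpr hgh
    have h2 : Module.rank ℂ (Module.End B V) ≤ Module.rank ℂ V :=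
      LinearMap.rank_le_of_injective _ hinj
    exact (not_le_of_gt Cardinal.aleph0_lt_continuum
      (hDrank.trans (h2.trans hrank)))

/-- Let `A` and `B` be unital associative `ℂ`-algebras with `B` of countable
`ℂ`-dimension. If `W` is a simple `A`-module and `V` is a simple `B`-module, then
`W ⊗_ℂ V` is a simple `A ⊗_ℂ B`-module. -/
theorem tensor_of_simple_isSimpleModule (A B W V : Type)
    [Ring A] [Algebra ℂ A] [Ring B] [Algebra ℂ B]
    [AddCommGroup W] [Module ℂ W] [Module A W] [IsScalarTower ℂ A W] [SMulCommClass ℂ A W]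
    [AddCommGroup V] [Module ℂ V] [Module B V] [IsScalarTower ℂ B V] [SMulCommClass ℂ B V]
    (hB : Module.rank ℂ B ≤ Cardinal.aleph0)
    (hW : IsSimpleModule A W) (hV : IsSimpleModule B V) :
    letI := tensorMod A B W V
    IsSimpleModule (A ⊗[ℂ] B) (W ⊗[ℂ] V) := by
  classical
  letI := tensorMod A B W V
  show IsSimpleModule (A ⊗[ℂ] B) (W ⊗[ℂ] V)
  haveI := hW; haveI := hV
  haveI := IsSimpleModule.nontrivial A W
  haveI := IsSimpleModule.nontrivial B V
  -- rank of V is countable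
  have hrankV : Module.rank ℂ V ≤ Cardinal.aleph0 := by
    obtain ⟨v₀, hv₀⟩ := exists_ne (0 : V)
    let g : B →ₗ[ℂ] V :=
      { toFun := fun b => b • v₀
        map_add' := fun a b => add_smul a b v₀
        map_smul' := fun c b => smul_assoc c b v₀ }
    have hsurj : Function.Surjective g :=
      IsSimpleModule.toSpanSingleton_surjective B hv₀
    exact le_trans (LinearMap.rank_le_of_surjective _ hsurj) hB
  -- basis of W
  set ι := Module.Basis.ofVectorSpaceIndex ℂ W with hι
  set bW : Module.Basis ι ℂ W := Module.Basis.ofVectorSpace ℂ W with hbW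
  set ρ : (W ⊗[ℂ] V) ≃ₗ[ℂ] (ι →₀ V) :=
    (TensorProduct.congr bW.repr (LinearEquiv.refl ℂ V)).trans
      (TensorProduct.finsuppScalarLeft ℂ V ι) with hρ
  have F1 : ∀ (w : W) (v : V) (j : ι), ρ (w ⊗ₜ[ℂ] v) j = bW.repr w j • v := by
    intro w v j
    simp [hρ, TensorProduct.congr_tmul,
      TensorProduct.finsuppScalarLeft_apply_tmul_apply]
  have hsmul : ∀ (a : A) (b : B) (w : W) (v : V),
      (a ⊗ₜ[ℂ] b) • (w ⊗ₜ[ℂ] v) = (a • w) ⊗ₜ[ℂ] (b • v) := by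
    intro a b w v
    show (((Module.endTensorEndAlgHom (R := ℂ) (S := ℂ) (A := ℂ) (M := W) (N := V)).comp
      (Algebra.TensorProduct.map (Algebra.lsmul ℂ ℂ W : A →ₐ[ℂ] Module.End ℂ W)
        (Algebra.lsmul ℂ ℂ V : B →ₐ[ℂ] Module.End ℂ V))) (a ⊗ₜ[ℂ] b)) (w ⊗ₜ[ℂ] v)
      = (a • w) ⊗ₜ[ℂ] (b • v)
    rw [AlgHom.comp_apply, Algebra.TensorProduct.map_tmul, Module.endTensorEndAlgHom_apply]
    rfl
  have F2 : ∀ (b : B) (x : W ⊗[ℂ] V) (j : ι),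
      ρ (((1 : A) ⊗ₜ[ℂ] b) • x) j = b • (ρ x j) := by
    intro b x j
    induction x using TensorProduct.induction_on with
    | zero => simp
    | tmul w v =>
        rw [hsmul, one_smul, F1, F1]
        exact smul_comm _ _ _
    | add x y hx hy => simp only [smul_add, map_add, Finsupp.coe_add, Pi.add_apply,
        hx, hy]
  -- reconstruction
  have hrec : ∀ x : W ⊗[ℂ] V, x = (ρ x).sum fun j v => bW j ⊗ₜ[ℂ] v := by
    have hsingle : ∀ (j : ι) (v : V), ρ.symm (Finsupp.single j v) = bW j ⊗ₜ[ℂ] v := by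
      intro j v
      apply ρ.injective
      rw [ρ.apply_symm_apply]
      ext j'
      rw [F1, Module.Basis.repr_self]
      rcases eq_or_ne j' j with rfl | hne
      · simp
      · simp [Finsupp.single_apply, hne.symm, Ne.symm hne]
    have hsymm : ∀ l : ι →₀ V, ρ.symm l = l.sum fun j v => bW j ⊗ₜ[ℂ] v := by
      intro l
      induction l using Finsupp.induction_linear with
      | zero => simp
      | add f g hf hg =>
          rw [map_add, hf, hg, Finsupp.sum_add_index]
          · intro j _; exact TensorProduct.tmul_zero _ _
          · intro j _ v v'; exact TensorProduct.tmul_add _ _ _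
      | single j v =>
          rw [hsingle]
          exact (Finsupp.sum_single_index (h := fun j v => bW j ⊗ₜ[ℂ] v)
            (TensorProduct.tmul_zero V (bW j))).symm
    intro x
    conv_lhs => rw [← ρ.symm_apply_apply x]
    exact hsymm (ρ x)
  -- nontriviality of the tensor product
  have htmul_ne : ∀ (w : W) (v : V), w ≠ 0 → v ≠ 0 → w ⊗ₜ[ℂ] v ≠ 0 := by
    intro w v hw hv0 h
    have hrw : bW.repr w ≠ 0 := fun hh => hw (by
      have := congrArg bW.repr.symm hh
      simpa using this)
    obtain ⟨j, hj⟩ := Finsupp.ne_iff.mp hrw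
    have : ρ (w ⊗ₜ[ℂ] v) j = 0 := by rw [h, map_zero]; rfl
    rw [F1] at this
    exact hv0 (by
      have := smul_eq_zero.mp this
      rcases this with h' | h'
      · exact absurd h' (by simpa using hj)
      · exact h')
  haveI : Nontrivial (W ⊗[ℂ] V) := by
    obtain ⟨w₀, hw₀⟩ := exists_ne (0 : W)
    obtain ⟨v₀, hv₀⟩ := exists_ne (0 : V)
    exact ⟨w₀ ⊗ₜ[ℂ] v₀, 0, htmul_ne _ _ hw₀ hv₀⟩
  refine (fun _ : IsSimpleOrder (Submodule (A ⊗[ℂ] B) (W ⊗[ℂ] V)) => ⟨⟩) ⟨fun M => or_iff_not_imp_left.mpr (fun hM => ?_)⟩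
  obtain ⟨x₀, hx₀M, hx₀⟩ := (Submodule.ne_bot_iff M).mp hM
  have hSne : Set.Nonempty {n : ℕ | ∃ y ∈ M, y ≠ 0 ∧ (ρ y).support.card = n} :=
    ⟨_, x₀, hx₀M, hx₀, rfl⟩
  set n₀ := sInf {n : ℕ | ∃ y ∈ M, y ≠ 0 ∧ (ρ y).support.card = n} with hn₀
  obtain ⟨y₀, hy₀M, hy₀ne, hy₀card⟩ := Nat.sInf_mem hSne
  have hmin : ∀ y ∈ M, y ≠ 0 → n₀ ≤ (ρ y).support.card :=
    fun y hyM hy => Nat.sInf_le ⟨y, hyM, hy, rfl⟩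
  set s := (ρ y₀).support with hs
  have hsne : s.Nonempty := by
    rw [hs, Finsupp.support_nonempty_iff]
    intro h
    exact hy₀ne (by apply ρ.injective; simpa using h)
  obtain ⟨j₀, hj₀⟩ := hsne
  have hu : ∀ y ∈ M, (ρ y).support ⊆ s → ρ y j₀ = 0 → y = 0 := by
    intro y hyM hsub hj
    by_contra hy
    have h1 := hmin y hyM hy
    have h2 : (ρ y).support ⊆ s.erase j₀ :=
      Finset.subset_erase.mpr ⟨hsub, Finsupp.notMem_support_iff.mpr hj⟩
    have h3 := Finset.card_le_card h2
    rw [Finset.card_erase_of_mem hj₀] at h3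
    have h4 : 0 < s.card := Finset.card_pos.mpr ⟨j₀, hj₀⟩
    omega
  set v₁ := ρ y₀ j₀ with hv₁
  have hv₁ne : v₁ ≠ 0 := Finsupp.mem_support_iff.mp hj₀
  set P : (W ⊗[ℂ] V) → V → Prop :=
    fun y v => y ∈ M ∧ (ρ y).support ⊆ s ∧ ρ y j₀ = v with hP
  have hsupp2 : ∀ (b : B) (y : W ⊗[ℂ] V), (ρ y).support ⊆ s →
      (ρ (((1 : A) ⊗ₜ[ℂ] b) • y)).support ⊆ s := by
    intro b y hysub j hjmem
    rw [Finsupp.mem_support_iff, F2] at hjmem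
    refine hysub (Finsupp.mem_support_iff.mpr (fun h0 => hjmem ?_))
    rw [h0, smul_zero]
  let T : Submodule B V :=
    { carrier := {v | ∃ y, P y v}
      zero_mem' := ⟨0, M.zero_mem, by simp, by simp⟩
      add_mem' := by
        rintro v v' ⟨y, hyM, hysub, hyj⟩ ⟨y', hy'M, hy'sub, hy'j⟩
        refine ⟨y + y', M.add_mem hyM hy'M, ?_, ?_⟩
        · rw [map_add]
          exact Finsupp.support_add.trans (Finset.union_subset hysub hy'sub)
        · rw [map_add, Finsupp.add_apply, hyj, hy'j]
      smul_mem' := by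
        rintro b v ⟨y, hyM, hysub, hyj⟩
        exact ⟨((1 : A) ⊗ₜ[ℂ] b) • y, M.smul_mem _ hyM, hsupp2 b y hysub,
          by rw [F2, hyj]⟩ }
  have hex : ∀ v : V, ∃ y, P y v := by
    intro v
    have hT : T = ⊤ := by
      rcases eq_bot_or_eq_top T with h | h
      · exfalso
        have hv₁T : v₁ ∈ T := ⟨y₀, hy₀M, subset_rfl, rfl⟩
        rw [h] at hv₁T
        exact hv₁ne ((Submodule.mem_bot B).mp hv₁T)
      · exact h
    have : v ∈ T := hT ▸ Submodule.mem_top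
    exact this
  choose ψ hψ using hex
  have huniq : ∀ (v : V) (y : W ⊗[ℂ] V), P y v → y = ψ v := by
    intro v y hy
    obtain ⟨h1, h2, h3⟩ := hy
    obtain ⟨h1', h2', h3'⟩ := hψ v
    refine sub_eq_zero.mp (hu (y - ψ v) (M.sub_mem h1 h1') ?_ ?_)
    · rw [map_sub]
      exact Finsupp.support_sub.trans (Finset.union_subset h2 h2')
    · rw [map_sub, Finsupp.sub_apply, h3, h3', sub_self]
  have hφ : ∀ j : ι, ∃ cc : ℂ, ∀ v : V, ρ (ψ v) j = cc • v := by
    intro j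
    let φ : Module.End B V :=
      { toFun := fun v => ρ (ψ v) j
        map_add' := by
          intro v v'
          have h := huniq (v + v') (ψ v + ψ v') ⟨M.add_mem (hψ v).1 (hψ v').1,
            by rw [map_add]
               exact Finsupp.support_add.trans
                 (Finset.union_subset (hψ v).2.1 (hψ v').2.1),
            by rw [map_add, Finsupp.add_apply, (hψ v).2.2, (hψ v').2.2]⟩
          show ρ (ψ (v + v')) j = ρ (ψ v) j + ρ (ψ v') j
          rw [← h, map_add, Finsupp.add_apply]
        map_smul' := by
          intro b v
          have h := huniq (b • v) (((1 : A) ⊗ₜ[ℂ] b) • ψ v)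
            ⟨M.smul_mem _ (hψ v).1, hsupp2 b (ψ v) (hψ v).2.1,
             by rw [F2, (hψ v).2.2]⟩
          show ρ (ψ (b • v)) j = b • ρ (ψ v) j
          rw [← h, F2] }
    obtain ⟨cc, hcc⟩ := dixmier_aux hV hrankV φ
    refine ⟨cc, fun v => ?_⟩
    have h2 := DFunLike.congr_fun hcc v
    exact (by simpa [Module.algebraMap_end_apply] using h2 : φ v = cc • v)
  choose c hc using hφ
  have hψv₁ : ψ v₁ = y₀ := (huniq v₁ y₀ ⟨hy₀M, subset_rfl, rfl⟩).symm
  have hcoord : ∀ j, ρ y₀ j = c j • v₁ := fun j => by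
    rw [← hψv₁]; exact hc j v₁
  have hy₀eq : y₀ = (s.sum fun j => c j • bW j) ⊗ₜ[ℂ] v₁ := by
    conv_lhs => rw [hrec y₀]
    rw [Finsupp.sum, TensorProduct.sum_tmul]
    refine Finset.sum_congr rfl (fun j hj => ?_)
    rw [hcoord j, TensorProduct.tmul_smul, TensorProduct.smul_tmul']
  set w₀ : W := s.sum fun j => c j • bW j with hw₀def
  have hw₀ne : w₀ ≠ 0 := by
    intro h
    exact hy₀ne (by rw [hy₀eq, h, TensorProduct.zero_tmul])
  have hmemM : w₀ ⊗ₜ[ℂ] v₁ ∈ M := by rw [← hy₀eq]; exact hy₀M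
  rw [Submodule.eq_top_iff']
  intro x
  induction x using TensorProduct.induction_on with
  | zero => exact M.zero_mem
  | tmul w v =>
      obtain ⟨a, ha⟩ := IsSimpleModule.toSpanSingleton_surjective A hw₀ne w
      obtain ⟨b, hb⟩ := IsSimpleModule.toSpanSingleton_surjective B hv₁ne v
      have hsm := M.smul_mem (a ⊗ₜ[ℂ] b) hmemM
      rw [LinearMap.toSpanSingleton_apply] at ha hb
      rwa [hsmul, ha, hb] at hsm
  | add x y hx hy => exact M.add_mem hx hy
end

section
/- Every simple weight module V over the Lie algebra 𝔪Δ (where 𝔪 = (t₁,…,t_n) ⊂ ℂ[t₁,…,t_n] and Δ = span{∂₁,…,∂_n}) satisfies 𝔪²Δ · V = 0; hence V is a simple 𝔤𝔩_n(ℂ)-module via the isomorphism 𝔪Δ/𝔪²Δ ≅ 𝔤𝔩_n. -/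
/-- The partial derivative `∂ᵢ` as a derivation of `ℂ[t₁,…,t_n]`. -/
noncomputable def pd {n : ℕ} (i : Fin n) :
    Derivation ℂ (MvPolynomial (Fin n) ℂ) (MvPolynomial (Fin n) ℂ) :=
  MvPolynomial.mkDerivation ℂ (Pi.single i 1)

/-- The element `t^α ∂ᵢ` of the Witt algebra `W_n⁺ = Der(ℂ[t₁,…,t_n])`. -/
noncomputable def wittElt {n : ℕ} (α : Fin n →₀ ℕ) (i : Fin n) :
    Derivation ℂ (MvPolynomial (Fin n) ℂ) (MvPolynomial (Fin n) ℂ) :=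
  (MvPolynomial.monomial α (1 : ℂ)) • pd i

noncomputable example (n : ℕ) : LieRing (Derivation ℂ (MvPolynomial (Fin n) ℂ) (MvPolynomial (Fin n) ℂ)) := inferInstance
noncomputable example (n : ℕ) : LieAlgebra ℂ (Derivation ℂ (MvPolynomial (Fin n) ℂ) (MvPolynomial (Fin n) ℂ)) := inferInstance

/-- The degree-`k` component of the Witt algebra `W_n⁺`, spanned by the `t^α ∂ᵢ`
with `|α| = k + 1`. -/
noncomputable def wittDeg (n : ℕ) (k : ℤ) :
    Submodule ℂ (Derivation ℂ (MvPolynomial (Fin n) ℂ) (MvPolynomial (Fin n) ℂ)) :=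
  Submodule.span ℂ {D | ∃ (α : Fin n →₀ ℕ) (i : Fin n),
    ((∑ j, α j : ℕ) : ℤ) = k + 1 ∧ D = wittElt α i}

/-- The Euler vector field `d = ∑ᵢ tᵢ∂ᵢ`. -/
noncomputable def eulerD (n : ℕ) :
    Derivation ℂ (MvPolynomial (Fin n) ℂ) (MvPolynomial (Fin n) ℂ) :=
  ∑ i, wittElt (Finsupp.single i 1) i

/-- The maximal ideal `𝔪 = (t₁,…,t_n)` of `ℂ[t₁,…,t_n]`. -/
noncomputable def mIdeal (n : ℕ) : Ideal (MvPolynomial (Fin n) ℂ) :=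
  RingHom.ker (MvPolynomial.constantCoeff : MvPolynomial (Fin n) ℂ →+* ℂ)

/-- The Lie subalgebra `𝔪Δ` of `W_n⁺`, consisting of the derivations preserving `𝔪`. -/
noncomputable def mDelta (n : ℕ) :
    LieSubalgebra ℂ (Derivation ℂ (MvPolynomial (Fin n) ℂ) (MvPolynomial (Fin n) ℂ)) where
  carrier := {D | ∀ f ∈ mIdeal n, D f ∈ mIdeal n}
  add_mem' := by
    intro D E hD hE f hf
    rw [Derivation.add_apply]
    exact (mIdeal n).add_mem (hD f hf) (hE f hf)
  zero_mem' := by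
    intro f hf
    rw [Derivation.zero_apply]
    exact (mIdeal n).zero_mem
  smul_mem' := by
    intro c D hD f hf
    rw [Derivation.smul_apply, Algebra.smul_def]
    exact Ideal.mul_mem_left _ _ (hD f hf)
  lie_mem' := by
    intro D E hD hE f hf
    rw [Derivation.commutator_apply]
    exact (mIdeal n).sub_mem (hD _ (hE f hf)) (hE _ (hD f hf))

lemma wittElt_mem_mDelta {n : ℕ} (α : Fin n →₀ ℕ) (i : Fin n) (hα : α ≠ 0) :
    wittElt α i ∈ mDelta n := by
  intro f hf
  rw [wittElt, Derivation.smul_apply, smul_eq_mul, mIdeal, RingHom.mem_ker, map_mul,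
    MvPolynomial.constantCoeff_monomial, if_neg hα, zero_mul]

lemma mDelta_pow_two {n : ℕ} {D : Derivation ℂ (MvPolynomial (Fin n) ℂ) (MvPolynomial (Fin n) ℂ)}
    (hD : D ∈ mDelta n) : ∀ g ∈ (mIdeal n) ^ 2, D g ∈ (mIdeal n) ^ 2 := by
  intro g hg
  rw [sq] at hg ⊢
  refine Submodule.mul_induction_on hg (fun a ha b hb => ?_) (fun x y hx hy => ?_)
  · rw [Derivation.leibniz, smul_eq_mul, smul_eq_mul]
    exact Submodule.add_mem _ (Ideal.mul_mem_mul ha (hD b hb)) (Ideal.mul_mem_mul hb (hD a ha))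
  · rw [map_add]
    exact Submodule.add_mem _ hx hy

/-- The Lie ideal `𝔪²Δ` of `𝔪Δ`: derivations mapping `𝔪` into `𝔪²`. -/
noncomputable def m2DeltaIdeal (n : ℕ) : LieIdeal ℂ (mDelta n) where
  carrier := {D | ∀ f ∈ mIdeal n, (D : Derivation ℂ (MvPolynomial (Fin n) ℂ)
    (MvPolynomial (Fin n) ℂ)) f ∈ (mIdeal n) ^ 2}
  add_mem' := by
    intro D E hD hE f hf
    rw [show ((D + E : ↥(mDelta n)) : Derivation ℂ (MvPolynomial (Fin n) ℂ) (MvPolynomial (Fin n) ℂ)) = ↑D + ↑E from rfl, Derivation.add_apply]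
    exact Submodule.add_mem _ (hD f hf) (hE f hf)
  zero_mem' := by
    intro f hf
    rw [show ((0 : ↥(mDelta n)) : Derivation ℂ (MvPolynomial (Fin n) ℂ) (MvPolynomial (Fin n) ℂ)) = 0 from rfl, Derivation.zero_apply]
    exact Submodule.zero_mem _
  smul_mem' := by
    intro c D hD f hf
    rw [show ((c • D : ↥(mDelta n)) : Derivation ℂ (MvPolynomial (Fin n) ℂ) (MvPolynomial (Fin n) ℂ)) = c • ↑D from rfl, Derivation.smul_apply, Algebra.smul_def]
    exact Ideal.mul_mem_left _ _ (hD f hf)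
  lie_mem := by
    intro D E hE f hf
    rw [show ((⁅D, E⁆ : ↥(mDelta n)) : Derivation ℂ (MvPolynomial (Fin n) ℂ) (MvPolynomial (Fin n) ℂ)) = ⁅(D : Derivation ℂ (MvPolynomial (Fin n) ℂ) (MvPolynomial (Fin n) ℂ)), ↑E⁆ from rfl, Derivation.commutator_apply]
    refine Submodule.sub_mem _ (mDelta_pow_two D.2 _ (hE f hf)) (hE _ (D.2 f hf))

/-- The eigenspace of `x ∈ L` acting on a Lie module `V` with eigenvalue `c`. -/
noncomputable def lieEigSp {L : Type*} [LieRing L] [LieAlgebra ℂ L] (V : Type*)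
    [AddCommGroup V] [Module ℂ V] [LieRingModule L V] [LieModule ℂ L V]
    (x : L) (c : ℂ) : Submodule ℂ V where
  carrier := {v | ⁅x, v⁆ = c • v}
  add_mem' := by
    intro u v hu hv
    simp only [Set.mem_setOf_eq, lie_add, smul_add] at *
    rw [hu, hv]
  zero_mem' := by simp
  smul_mem' := by
    intro r v hv
    simp only [Set.mem_setOf_eq] at *
    rw [lie_smul, hv, smul_comm]

section AuxM2

open MvPolynomial

variable {n : ℕ}

local notation "Wd" => Derivation ℂ (MvPolynomial (Fin n) ℂ) (MvPolynomial (Fin n) ℂ)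

lemma pd_eq_pderiv (i : Fin n) : pd i = pderiv i := (pderiv_def i).symm

lemma wittElt_apply_X (α : Fin n →₀ ℕ) (i j : Fin n) :
    wittElt α i (X j) = if j = i then monomial α 1 else 0 := by
  rw [wittElt, Derivation.smul_apply, pd_eq_pderiv, pderiv_X, Pi.single_apply, smul_eq_mul,
    mul_ite, mul_one, mul_zero]

lemma deriv_sum_apply {ι : Type*} (s : Finset ι) (D : ι → Wd) (p : MvPolynomial (Fin n) ℂ) :
    (∑ i ∈ s, D i) p = ∑ i ∈ s, D i p := by
  induction s using Finset.cons_induction with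
  | empty => simp
  | cons a s ha ih => rw [Finset.sum_cons, Finset.sum_cons, Derivation.add_apply, ih]

lemma euler_monomial (α : Fin n →₀ ℕ) (c : ℂ) :
    eulerD n (monomial α c) = (((∑ j, α j : ℕ) : ℂ)) • monomial α c := by
  rw [eulerD, deriv_sum_apply, Nat.cast_sum, Finset.sum_smul]
  refine Finset.sum_congr rfl fun j _ => ?_
  rw [wittElt, Derivation.smul_apply, pd_eq_pderiv, pderiv_monomial, smul_eq_mul,
    monomial_mul]
  rcases Nat.eq_zero_or_pos (α j) with h | h
  · simp [h]
  · have hα : Finsupp.single j 1 + (α - Finsupp.single j 1) = α := by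
      ext m
      rw [Finsupp.add_apply, Finsupp.tsub_apply]
      rcases eq_or_ne m j with rfl | hm
      · rw [Finsupp.single_eq_same]; omega
      · rw [Finsupp.single_eq_of_ne hm]; omega
    rw [hα, smul_monomial]
    congr 1
    rw [smul_eq_mul]
    ring

lemma eulerD_X (m : Fin n) : eulerD n (X m) = X m := by
  have hX : (X m : MvPolynomial (Fin n) ℂ) = monomial (Finsupp.single m 1) 1 := rfl
  rw [hX, euler_monomial]
  simp [Finsupp.single_apply]

lemma euler_bracket (α : Fin n →₀ ℕ) (i : Fin n) :
    ⁅eulerD n, wittElt α i⁆ = (((∑ j, α j : ℕ) : ℂ) - 1) • wittElt α i := by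
  apply derivation_ext
  intro m
  rw [Derivation.commutator_apply, Derivation.smul_apply, eulerD_X, wittElt_apply_X]
  rcases eq_or_ne m i with rfl | h
  · rw [if_pos rfl, euler_monomial, sub_smul, one_smul]
  · rw [if_neg h, map_zero, smul_zero, sub_zero]

/-- The Euler element as an element of `𝔪Δ`. -/
noncomputable def euM (n : ℕ) : mDelta n :=
  ∑ i, (⟨wittElt (Finsupp.single i 1) i, wittElt_mem_mDelta _ _ (by simp)⟩ : mDelta n)

lemma coe_euM : ((euM n : mDelta n) : Wd) = eulerD n := by
  rw [euM, eulerD]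
  exact AddSubmonoidClass.coe_finset_sum _ _

lemma euM_bracket (α : Fin n →₀ ℕ) (i : Fin n) (h : wittElt α i ∈ mDelta n) :
    ⁅euM n, (⟨wittElt α i, h⟩ : mDelta n)⁆
      = (((∑ j, α j : ℕ) : ℂ) - 1) • (⟨wittElt α i, h⟩ : mDelta n) := by
  apply Subtype.ext
  rw [LieSubalgebra.coe_bracket, coe_euM]
  exact euler_bracket α i

lemma X_mem_mIdeal (j : Fin n) : (X j : MvPolynomial (Fin n) ℂ) ∈ mIdeal n := by
  rw [mIdeal, RingHom.mem_ker, constantCoeff_X]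

lemma support_ne_zero_of_mem_mDelta (x : mDelta n) (j : Fin n)
    {α : Fin n →₀ ℕ} (hα : α ∈ (((x : Wd)) (X j)).support) : α ≠ 0 := by
  rintro rfl
  have h1 : (x : Wd) (X j) ∈ mIdeal n := x.2 _ (X_mem_mIdeal j)
  rw [mIdeal, RingHom.mem_ker, constantCoeff_eq] at h1
  exact (mem_support_iff.mp hα) h1

lemma finsupp_eq_zero_of_sum {β : Fin n →₀ ℕ} (h : (∑ j, β j) = 0) : β = 0 := by
  ext j
  exact (Finset.sum_eq_zero_iff.mp h) j (Finset.mem_univ j)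

lemma coeff_eq_zero_of_mem_sq {p : MvPolynomial (Fin n) ℂ} (hp : p ∈ (mIdeal n) ^ 2) :
    ∀ (α : Fin n →₀ ℕ), (∑ j, α j) ≤ 1 → coeff α p = 0 := by
  rw [sq] at hp
  refine Submodule.mul_induction_on hp ?_ ?_
  · intro a ha b hb α hα
    rw [coeff_mul]
    refine Finset.sum_eq_zero fun x hx => ?_
    rw [Finset.HasAntidiagonal.mem_antidiagonal] at hx
    have hsum : (∑ j, x.1 j) + (∑ j, x.2 j) ≤ 1 := by
      rw [← Finset.sum_add_distrib]
      calc (∑ j, (x.1 j + x.2 j)) = ∑ j, α j := by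
            refine Finset.sum_congr rfl fun j _ => ?_
            rw [← hx, Finsupp.add_apply]
        _ ≤ 1 := hα
    rw [mIdeal, RingHom.mem_ker, constantCoeff_eq] at ha hb
    rcases Nat.eq_zero_or_pos (∑ j, x.1 j) with h1 | h1
    · rw [finsupp_eq_zero_of_sum h1, ha, zero_mul]
    · have h2 : (∑ j, x.2 j) = 0 := by omega
      rw [finsupp_eq_zero_of_sum h2, hb, mul_zero]
  · intro p q hp hq α hα
    rw [coeff_add, hp α hα, hq α hα, add_zero]

lemma two_le_of_mem_m2 {x : mDelta n} (hx : x ∈ m2DeltaIdeal n) (j : Fin n)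
    {α : Fin n →₀ ℕ} (hα : α ∈ ((x : Wd) (X j)).support) : 2 ≤ ∑ m, α m := by
  by_contra h
  push_neg at h
  exact (mem_support_iff.mp hα)
    (coeff_eq_zero_of_mem_sq (hx _ (X_mem_mIdeal j)) α (by omega))

lemma deriv_eq_sum_wittElt (D : Wd) :
    D = ∑ j : Fin n, ∑ α ∈ (D (X j)).support, coeff α (D (X j)) • wittElt α j := by
  apply derivation_ext
  intro m
  rw [deriv_sum_apply]
  rw [Finset.sum_eq_single_of_mem m (Finset.mem_univ m)
    (fun j _ hj => by
      rw [deriv_sum_apply]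
      refine Finset.sum_eq_zero fun α _ => ?_
      rw [Derivation.smul_apply, wittElt_apply_X, if_neg (Ne.symm hj), smul_zero])]
  rw [deriv_sum_apply]
  refine ((support_sum_monomial_coeff (D (X m))).symm).trans
    (Finset.sum_congr rfl fun α hα => ?_)
  rw [Derivation.smul_apply, wittElt_apply_X, if_pos rfl, smul_monomial, smul_eq_mul, mul_one]

lemma mDelta_eq_sum (x : mDelta n) :
    x = ∑ j : Fin n, ∑ α ∈ ((x : Wd) (X j)).support.attach,
      coeff α.1 ((x : Wd) (X j)) •
        (⟨wittElt α.1 j, wittElt_mem_mDelta α.1 j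
          (support_ne_zero_of_mem_mDelta x j α.2)⟩ : mDelta n) := by
  apply Subtype.ext
  rw [AddSubmonoidClass.coe_finset_sum]
  have hco : ∀ j : Fin n, ((∑ α ∈ ((x : Wd) (X j)).support.attach,
      coeff α.1 ((x : Wd) (X j)) •
        (⟨wittElt α.1 j, wittElt_mem_mDelta α.1 j
          (support_ne_zero_of_mem_mDelta x j α.2)⟩ : mDelta n) : mDelta n) : Wd)
      = ∑ α ∈ ((x : Wd) (X j)).support, coeff α ((x : Wd) (X j)) • wittElt α j := by
    intro j
    rw [AddSubmonoidClass.coe_finset_sum]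
    rw [← Finset.sum_attach (((x : Wd) (X j)).support)
      (fun α => coeff α ((x : Wd) (X j)) • wittElt α j)]
    rfl
  rw [Finset.sum_congr rfl fun j _ => hco j]
  exact deriv_eq_sum_wittElt _

section ModuleV

variable {V : Type} [AddCommGroup V] [Module ℂ V] [LieRingModule (mDelta n) V]
  [LieModule ℂ (mDelta n) V]

lemma mem_lieEigSp {x : mDelta n} {c : ℂ} {v : V} :
    v ∈ lieEigSp V x c ↔ ⁅x, v⁆ = c • v := Iff.rfl

lemma finset_sum_lie {ι : Type*} (s : Finset ι) (f : ι → mDelta n) (v : V) :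
    ⁅∑ i ∈ s, f i, v⁆ = ∑ i ∈ s, ⁅f i, v⁆ := by
  induction s using Finset.cons_induction with
  | empty => rw [Finset.sum_empty, Finset.sum_empty, zero_lie]
  | cons a s ha ih => rw [Finset.sum_cons, Finset.sum_cons, add_lie, ih]

lemma lie_shift (α : Fin n →₀ ℕ) (i : Fin n) (h : wittElt α i ∈ mDelta n) {c : ℂ} {v : V}
    (hv : v ∈ lieEigSp V (euM n) c) :
    ⁅(⟨wittElt α i, h⟩ : mDelta n), v⁆
      ∈ lieEigSp V (euM n) (c + ((∑ j, α j : ℕ) : ℂ) - 1) := by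
  rw [mem_lieEigSp] at hv ⊢
  rw [leibniz_lie, euM_bracket, smul_lie, hv, lie_smul, ← add_smul]
  congr 1
  ring

lemma lie_mem_iSup_of_eig {c : ℂ} {v : V} (hv : v ∈ lieEigSp V (euM n) c) (x : mDelta n) :
    ⁅x, v⁆ ∈ ⨆ k : ℕ, lieEigSp V (euM n) (c + k) := by
  rw [mDelta_eq_sum x, finset_sum_lie]
  refine Submodule.sum_mem _ fun j _ => ?_
  rw [finset_sum_lie]
  refine Submodule.sum_mem _ fun α _ => ?_
  rw [smul_lie]
  refine Submodule.smul_mem _ _ ?_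
  have h1 : 1 ≤ ∑ m, α.1 m := by
    rcases Nat.eq_zero_or_pos (∑ m, α.1 m) with h0 | h0
    · exact absurd (finsupp_eq_zero_of_sum h0)
        (support_ne_zero_of_mem_mDelta x j α.2)
    · exact h0
  have hs := lie_shift α.1 j
    (wittElt_mem_mDelta α.1 j (support_ne_zero_of_mem_mDelta x j α.2)) hv
  have hk : c + ((∑ m, α.1 m : ℕ) : ℂ) - 1 = c + ((∑ m, α.1 m - 1 : ℕ) : ℂ) := by
    rw [Nat.cast_sub h1]
    push_cast
    ring
  rw [hk] at hs
  exact le_iSup (fun k : ℕ => lieEigSp V (euM n) (c + k)) (∑ m, α.1 m - 1) hs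

lemma lie_mem_iSup_of_eig2 {c : ℂ} {v : V} (hv : v ∈ lieEigSp V (euM n) c)
    {x : mDelta n} (hx : x ∈ m2DeltaIdeal n) :
    ⁅x, v⁆ ∈ ⨆ k : ℕ, lieEigSp V (euM n) (c + 1 + k) := by
  rw [mDelta_eq_sum x, finset_sum_lie]
  refine Submodule.sum_mem _ fun j _ => ?_
  rw [finset_sum_lie]
  refine Submodule.sum_mem _ fun α _ => ?_
  rw [smul_lie]
  refine Submodule.smul_mem _ _ ?_
  have h2 : 2 ≤ ∑ m, α.1 m := two_le_of_mem_m2 hx j α.2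
  have hs := lie_shift α.1 j
    (wittElt_mem_mDelta α.1 j (support_ne_zero_of_mem_mDelta x j α.2)) hv
  have hk : c + ((∑ m, α.1 m : ℕ) : ℂ) - 1 = c + 1 + ((∑ m, α.1 m - 2 : ℕ) : ℂ) := by
    rw [Nat.cast_sub h2]
    push_cast
    ring
  rw [hk] at hs
  exact le_iSup (fun k : ℕ => lieEigSp V (euM n) (c + 1 + k)) (∑ m, α.1 m - 2) hs

lemma stable_iSup (c : ℂ) (y : mDelta n) (m : V)
    (hm : m ∈ ⨆ k : ℕ, lieEigSp V (euM n) (c + k)) :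
    ⁅y, m⁆ ∈ ⨆ k : ℕ, lieEigSp V (euM n) (c + k) := by
  refine Submodule.iSup_induction _
    (motive := fun w => ⁅y, w⁆ ∈ ⨆ k : ℕ, lieEigSp V (euM n) (c + k)) hm (fun k w hw => ?_) ?_ ?_
  · have h2 := lie_mem_iSup_of_eig hw y
    refine (iSup_le (fun j => ?_) :
      (⨆ j : ℕ, lieEigSp V (euM n) (c + k + j)) ≤ _) h2
    have hc : c + (k : ℂ) + (j : ℂ) = c + ((k + j : ℕ) : ℂ) := by push_cast; ring
    rw [hc]
    exact le_iSup (fun k : ℕ => lieEigSp V (euM n) (c + k)) (k + j)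
  · show ⁅y, (0 : V)⁆ ∈ _
    rw [lie_zero]; exact Submodule.zero_mem _
  · intro a b ha hb
    show ⁅y, a + b⁆ ∈ _
    rw [lie_add]; exact Submodule.add_mem _ ha hb

lemma lieEigSp_eq_eigenspace (x : mDelta n) (c : ℂ) :
    lieEigSp V x c = Module.End.eigenspace (LieModule.toEnd ℂ (mDelta n) V x) c := by
  ext v
  rw [Module.End.mem_eigenspace_iff, mem_lieEigSp, LieModule.toEnd_apply_apply]

end ModuleV

end AuxM2

/-- Every simple weight module `V` over the Lie algebra `𝔪Δ` (weight meaning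
that `d₁ = t₁∂₁, …, d_n = t_n∂_n` act simultaneously diagonalizably) satisfies
`𝔪²Δ · V = 0` (hence is a module for `𝔪Δ/𝔪²Δ ≅ 𝔤𝔩_n`). -/
theorem simple_weight_mDelta_module_trivial_m2 (n : ℕ) (V : Type) [AddCommGroup V]
    [Module ℂ V] [LieRingModule (mDelta n) V] [LieModule ℂ (mDelta n) V]
    (hirr : LieModule.IsIrreducible ℂ (mDelta n) V)
    (hweight : (⨆ μ : Fin n → ℂ, ⨅ i : Fin n,
      lieEigSp V (⟨wittElt (Finsupp.single i 1) i, wittElt_mem_mDelta _ _ (by simp)⟩ :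
        mDelta n) (μ i)) = ⊤) :
    ∀ x : mDelta n, (x ∈ m2DeltaIdeal n) → ∀ v : V, ⁅x, v⁆ = 0 := by
  classical
  haveI := hirr
  haveI : Nontrivial V := LieModule.nontrivial_of_isIrreducible ℂ (mDelta n) V
  -- The supremum of all Euler eigenspaces is everything.
  have htop : (⨆ c : ℂ, lieEigSp V (euM n) c) = ⊤ := by
    rw [← top_le_iff, ← hweight]
    refine iSup_le fun μ => le_trans ?_ (le_iSup _ (∑ i, μ i))
    intro w hw
    have hwi : ∀ i : Fin n,
        ⁅(⟨wittElt (Finsupp.single i 1) i, wittElt_mem_mDelta _ _ (by simp)⟩ : mDelta n), w⁆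
          = μ i • w := fun i => (Submodule.mem_iInf _).mp hw i
    show ⁅euM n, w⁆ = (∑ i, μ i) • w
    rw [euM, finset_sum_lie, Finset.sum_congr rfl (fun i _ => hwi i), ← Finset.sum_smul]
  -- Pick a nonzero eigenvector.
  have hne : ∃ c : ℂ, lieEigSp V (euM n) c ≠ ⊥ := by
    by_contra h
    push_neg at h
    have hbot : (⊤ : Submodule ℂ V) = ⊥ := by
      rw [← htop, iSup_eq_bot]
      exact h
    exact absurd hbot.symm bot_ne_top
  obtain ⟨c, hc⟩ := hne
  obtain ⟨v₀, hv₀, hv₀ne⟩ := (Submodule.ne_bot_iff _).mp hc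
  -- The Lie submodule U = ⨆ₖ E(c+k).
  let U : LieSubmodule ℂ (mDelta n) V :=
    { (⨆ k : ℕ, lieEigSp V (euM n) (c + k)) with
      lie_mem := fun {y} {m} hm => stable_iSup c y m hm }
  have hv₀U : v₀ ∈ U := by
    have h0 : lieEigSp V (euM n) c ≤ ⨆ k : ℕ, lieEigSp V (euM n) (c + k) := by
      have := le_iSup (fun k : ℕ => lieEigSp V (euM n) (c + k)) 0
      simpa using this
    exact h0 hv₀
  have hUtop : U = ⊤ := by
    rcases hirr.eq_bot_or_eq_top U with h | h
    · exfalso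
      rw [h] at hv₀U
      exact hv₀ne ((LieSubmodule.mem_bot _).mp hv₀U)
    · exact h
  -- The Lie submodule U' = ⨆ₖ E(c+1+k).
  let U' : LieSubmodule ℂ (mDelta n) V :=
    { (⨆ k : ℕ, lieEigSp V (euM n) (c + 1 + k)) with
      lie_mem := fun {y} {m} hm => stable_iSup (c + 1) y m hm }
  -- 𝔪²Δ · V ⊆ U'.
  have hIN : ⁅m2DeltaIdeal n, (⊤ : LieSubmodule ℂ (mDelta n) V)⁆ ≤ U' := by
    rw [LieSubmodule.lie_le_iff]
    intro y hy m _
    have hmU : m ∈ U := by rw [hUtop]; exact LieSubmodule.mem_top m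
    have hmU' : m ∈ ⨆ k : ℕ, lieEigSp V (euM n) (c + k) := hmU
    show ⁅y, m⁆ ∈ ⨆ k : ℕ, lieEigSp V (euM n) (c + 1 + k)
    refine Submodule.iSup_induction _
      (motive := fun w => ⁅y, w⁆ ∈ ⨆ k : ℕ, lieEigSp V (euM n) (c + 1 + k)) hmU'
      (fun k w hw => ?_) ?_ ?_
    · have h2 := lie_mem_iSup_of_eig2 hw hy
      refine (iSup_le (fun j => ?_) :
        (⨆ j : ℕ, lieEigSp V (euM n) (c + (k : ℂ) + 1 + j)) ≤ _) h2
      have hc2 : c + (k : ℂ) + 1 + (j : ℂ) = c + 1 + ((k + j : ℕ) : ℂ) := by push_cast; ring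
      rw [hc2]
      exact le_iSup (fun k : ℕ => lieEigSp V (euM n) (c + 1 + k)) (k + j)
    · show ⁅y, (0 : V)⁆ ∈ _
      rw [lie_zero]; exact Submodule.zero_mem _
    · intro a b ha hb
      show ⁅y, a + b⁆ ∈ _
      rw [lie_add]; exact Submodule.add_mem _ ha hb
  -- 𝔪²Δ · V is a proper submodule, hence zero.
  have hbot : ⁅m2DeltaIdeal n, (⊤ : LieSubmodule ℂ (mDelta n) V)⁆ = ⊥ := by
    rcases hirr.eq_bot_or_eq_top ⁅m2DeltaIdeal n, (⊤ : LieSubmodule ℂ (mDelta n) V)⁆ with h | h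
    · exact h
    · exfalso
      have hvmem : v₀ ∈ ⁅m2DeltaIdeal n, (⊤ : LieSubmodule ℂ (mDelta n) V)⁆ := by
        rw [h]; exact LieSubmodule.mem_top v₀
      have hv' : v₀ ∈ U' := hIN hvmem
      have hv'' : v₀ ∈ ⨆ k : ℕ, lieEigSp V (euM n) (c + 1 + k) := hv'
      -- eigenspace independence
      have hind := Module.End.eigenspaces_iSupIndep (LieModule.toEnd ℂ (mDelta n) V (euM n))
      have hdisj := hind c
      have hle : (⨆ k : ℕ, lieEigSp V (euM n) (c + 1 + k)) ≤
          ⨆ (μ : ℂ) (_ : μ ≠ c),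
            Module.End.eigenspace (LieModule.toEnd ℂ (mDelta n) V (euM n)) μ := by
        refine iSup_le fun k => ?_
        have hne' : c + 1 + (k : ℂ) ≠ c := by
          intro hcon
          have : (1 : ℂ) + k = 0 := by linear_combination hcon
          have h2 : ((k + 1 : ℕ) : ℂ) = 0 := by push_cast; linear_combination this
          exact Nat.cast_ne_zero.mpr (Nat.succ_ne_zero k) h2
        rw [lieEigSp_eq_eigenspace]
        exact le_iSup₂ (f := fun (μ : ℂ) (_ : μ ≠ c) =>
          Module.End.eigenspace (LieModule.toEnd ℂ (mDelta n) V (euM n)) μ) (c + 1 + k) hne'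
      have hv0mem : v₀ ∈ Module.End.eigenspace (LieModule.toEnd ℂ (mDelta n) V (euM n)) c := by
        rw [← lieEigSp_eq_eigenspace]; exact hv₀
      exact hv₀ne (Submodule.disjoint_def.mp hdisj v₀ hv0mem (hle hv''))
  intro x hx v
  have hmem : ⁅x, v⁆ ∈ ⁅m2DeltaIdeal n, (⊤ : LieSubmodule ℂ (mDelta n) V)⁆ :=
    LieSubmodule.lie_mem_lie hx (LieSubmodule.mem_top v)
  rw [hbot] at hmem
  exact (LieSubmodule.mem_bot _).mp hmem
end

section
/- Let 𝔤 be a Lie algebra with a ℤ-grading 𝔤 = ⊕_{k ≥ −1} 𝔤_k induced by an element d ∈ 𝔤₀ (i.e., [d,x] = kx for x ∈ 𝔤_k), and let 𝔫 = ⊕_{k ≥ 0} 𝔤_k, 𝔫⁺ = ⊕_{k ≥ 1} 𝔤_k. If V is a simple 𝔫-module on which d acts diagonalizably with eigenvalues contained in λ + ℤ_{≥0} for some λ that is itself an eigenvalue, then 𝔫⁺ · V is a proper submodule of V, hence 𝔫⁺ · V = 0. -/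
/-- Let `𝔫 = ⊕_{k ≥ 0} 𝔤_k` be the nonnegative part of a Lie algebra graded
in degrees `≥ −1`, the grading being induced by an element `d ∈ 𝔤₀` (i.e. `[d,x] = k·x` for
`x ∈ 𝔤_k`), and let `𝔫⁺ = ⊕_{k ≥ 1} 𝔤_k`.  If `V` is a simple `𝔫`-module on which `d` acts
diagonalizably with eigenvalues contained in `λ + ℤ_{≥0}`, where `λ` itself is an eigenvalue,
then `𝔫⁺ · V` is a proper submodule of `V`; hence `𝔫⁺ · V = 0`. -/
theorem positive_part_annihilates (N : Type) [LieRing N] [LieAlgebra ℂ N]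
    (g : ℕ → Submodule ℂ N)
    (hsup : (⨆ k : ℕ, g k) = ⊤)
    (hbracket : ∀ k l : ℕ, ∀ x ∈ g k, ∀ y ∈ g l, ⁅x, y⁆ ∈ g (k + l))
    (d : N) (hd : d ∈ g 0)
    (had : ∀ k : ℕ, ∀ x ∈ g k, ⁅d, x⁆ = (k : ℂ) • x)
    (V : Type) [AddCommGroup V] [Module ℂ V] [LieRingModule N V] [LieModule ℂ N V]
    (hirr : LieModule.IsIrreducible ℂ N V)
    (lam : ℂ)
    (hdiag : (⨆ j : ℕ, lieEigSp V d (lam + j)) = ⊤)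
    (hlam : lieEigSp V d lam ≠ ⊥) :
    (∀ k : ℕ, 1 ≤ k → ∀ x ∈ g k, ∀ v : V, ⁅x, v⁆ = 0) := by
  classical
  -- identify lieEigSp with eigenspaces of the endomorphism given by d
  set φ : Module.End ℂ V := LieModule.toEnd ℂ N V d with hφ
  have hE : ∀ c : ℂ, lieEigSp V d c = φ.eigenspace c := by
    intro c
    ext v
    constructor
    · intro hv
      rw [Module.End.mem_eigenspace_iff]
      simpa [hφ, LieModule.toEnd_apply_apply] using (show ⁅d, v⁆ = c • v from hv)
    · intro hv
      rw [Module.End.mem_eigenspace_iff] at hv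
      exact (show ⁅d, v⁆ = c • v by simpa [hφ, LieModule.toEnd_apply_apply] using hv)
  -- the target sup of positive eigenspaces
  set S : Submodule ℂ V := ⨆ j : ℕ, lieEigSp V d (lam + (j + 1 : ℕ)) with hS
  -- key: positive part maps V into S
  have hkey : ∀ k : ℕ, 1 ≤ k → ∀ x ∈ g k, ∀ v : V, ⁅x, v⁆ ∈ S := by
    intro k hk x hx v
    have hv : v ∈ (⨆ j : ℕ, lieEigSp V d (lam + j)) := by rw [hdiag]; trivial
    have hle : (⨆ j : ℕ, lieEigSp V d (lam + j)) ≤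
        Submodule.comap (LieModule.toEnd ℂ N V x) S := by
      apply iSup_le
      intro j w hw
      simp only [Submodule.mem_comap, LieModule.toEnd_apply_apply]
      have hdw : ⁅d, w⁆ = (lam + j) • w := hw
      have hmem : ⁅x, w⁆ ∈ lieEigSp V d (lam + (j + k : ℕ)) := by
        show ⁅d, ⁅x, w⁆⁆ = (lam + (j + k : ℕ)) • ⁅x, w⁆
        have : ⁅d, ⁅x, w⁆⁆ = ⁅⁅d, x⁆, w⁆ + ⁅x, ⁅d, w⁆⁆ := by
          rw [leibniz_lie]
        rw [this, had k x hx, hdw, smul_lie, lie_smul]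
        push_cast
        ring_nf
        module
      have hj : (j + k - 1) + 1 = j + k := Nat.succ_pred_eq_of_pos (Nat.add_pos_right j hk)
      have : lieEigSp V d (lam + (j + k : ℕ)) ≤ S := by
        rw [hS]
        have := le_iSup (fun j : ℕ => lieEigSp V d (lam + (j + 1 : ℕ))) (j + k - 1)
        rwa [hj] at this
      exact this hmem
    simpa [LieModule.toEnd_apply_apply] using (hle hv)
  -- the submodule generated by the positive part acting on V
  set G : Set V := {w : V | ∃ k : ℕ, 1 ≤ k ∧ ∃ x ∈ g k, ∃ v : V, ⁅x, v⁆ = w} with hG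
  set Wsub : Submodule ℂ V := Submodule.span ℂ G with hW
  -- stability under the Lie action
  have hstab : ∀ y : N, ∀ w ∈ Wsub, ⁅y, w⁆ ∈ Wsub := by
    have hT : ∀ l : ℕ, ∀ y ∈ g l, ∀ w ∈ Wsub, ⁅y, w⁆ ∈ Wsub := by
      intro l y hy w hw
      induction hw using Submodule.span_induction with
      | mem w hwG =>
        obtain ⟨k, hk, x, hx, v, rfl⟩ := hwG
        have : ⁅y, ⁅x, v⁆⁆ = ⁅⁅y, x⁆, v⁆ + ⁅x, ⁅y, v⁆⁆ := by rw [leibniz_lie]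
        rw [this]
        refine Submodule.add_mem _ ?_ ?_
        · exact Submodule.subset_span ⟨l + k, hk.trans (Nat.le_add_left k l), ⁅y, x⁆,
            hbracket l k y hy x hx, v, rfl⟩
        · exact Submodule.subset_span ⟨k, hk, x, hx, ⁅y, v⁆, rfl⟩
      | zero => simp
      | add u v _ _ hu hv => rw [lie_add]; exact Submodule.add_mem _ hu hv
      | smul c u _ hu => rw [lie_smul]; exact Submodule.smul_mem _ c hu
    -- the set of good y is a submodule containing every g l, hence everything
    intro y w hw
    let T : Submodule ℂ N :=
      { carrier := {y : N | ∀ w ∈ Wsub, ⁅y, w⁆ ∈ Wsub}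
        add_mem' := by
          intro a b ha hb w hw
          rw [add_lie]; exact Submodule.add_mem _ (ha w hw) (hb w hw)
        zero_mem' := by intro w hw; rw [zero_lie]; exact Submodule.zero_mem _
        smul_mem' := by
          intro c a ha w hw
          rw [smul_lie]; exact Submodule.smul_mem _ c (ha w hw) }
    have hyT : y ∈ T := by
      have : (⊤ : Submodule ℂ N) ≤ T := by
        rw [← hsup]; exact iSup_le fun l z hz => hT l z hz
      exact this trivial
    exact hyT w hw
  -- package as a Lie submodule
  let W : LieSubmodule ℂ N V :=
    { Wsub with lie_mem := fun {y w} hw => hstab y w hw }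
  -- W ≤ S
  have hWS : Wsub ≤ S := by
    rw [hW, Submodule.span_le]
    rintro w ⟨k, hk, x, hx, v, rfl⟩
    exact hkey k hk x hx v
  -- S is disjoint from the lam-eigenspace
  have hdisj : Disjoint (lieEigSp V d lam) S := by
    have hind := φ.eigenspaces_iSupIndep
    have h1 : Disjoint (φ.eigenspace lam) (⨆ μ ≠ lam, φ.eigenspace μ) := hind lam
    refine Disjoint.mono ?_ ?_ h1
    · rw [hE]
    · rw [hS]
      apply iSup_le
      intro j
      rw [hE]
      have hne : lam + (j + 1 : ℕ) ≠ lam := by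
        intro h
        have : ((j + 1 : ℕ) : ℂ) = 0 := by linear_combination h
        exact_mod_cast Nat.succ_ne_zero j (by exact_mod_cast this)
      exact le_iSup₂_of_le (lam + (j + 1 : ℕ)) hne le_rfl
  -- W is proper, hence trivial by irreducibility
  have hWbot : W = ⊥ := by
    rcases hirr.2 W with h | h
    · exact h
    · exfalso
      obtain ⟨v0, hv0, hv0ne⟩ := Submodule.exists_mem_ne_zero_of_ne_bot hlam
      have hv0W : v0 ∈ Wsub := by
        have : v0 ∈ W := by rw [h]; trivial
        exact this
      have : v0 = 0 := by
        have := hdisj.le_bot (Submodule.mem_inf.mpr ⟨hv0, hWS hv0W⟩)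
        simpa using this
      exact hv0ne this
  intro k hk x hx v
  have : ⁅x, v⁆ ∈ W := Submodule.subset_span ⟨k, hk, x, hx, v, rfl⟩
  rw [hWbot] at this
  simpa using this
end
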